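/- If (e1, e2) is a sync-preserving race of a trace σ, then there exists a correct reordering ρ of σ in which both e1 and e2 are σ-enabled and whose total order is a restriction of the trace order of σ (i.e., ρ is a subsequence of σ). -/

import Mathlib

/- A model of concurrent program traces: events are read/write/acquire/release
operations performed by threads; a trace is a finite sequence of events,
identified by their indices. -/

inductive Op where
  | read  (x : ℕ)
  | write (x : ℕ)
  | acq (l : ℕ)
  | rel (l : ℕ)
deriving DecidableEq

structure Event where
  thread : ℕ
  op : Op
deriving DecidableEq

def evAt (σ : List Event) (i : ℕ) : Event := σ.getD i ⟨0, Op.read 0⟩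

def threadOf (σ : List Event) (i : ℕ) : ℕ := (evAt σ i).thread

def isAcq (σ : List Event) (l i : ℕ) : Prop := i < σ.length ∧ (evAt σ i).op = Op.acq l
def isRel (σ : List Event) (l i : ℕ) : Prop := i < σ.length ∧ (evAt σ i).op = Op.rel l
def isRead (σ : List Event) (x i : ℕ) : Prop := i < σ.length ∧ (evAt σ i).op = Op.read x
def isWrite (σ : List Event) (x i : ℕ) : Prop := i < σ.length ∧ (evAt σ i).op = Op.write x

/-- `e` is an event on lock `l` (an acquire or release of `l`). -/
def onLock (l : ℕ) (e : Event) : Bool := decide (e.op = Op.acq l ∨ e.op = Op.rel l)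

/-- Thread order: `i` and `j` are events of the same thread with `i` not after `j`. -/
def TO (σ : List Event) (i j : ℕ) : Prop :=
  i ≤ j ∧ j < σ.length ∧ threadOf σ i = threadOf σ j

/-- Alternating sequence of matched acquire/release pairs on lock `l`, each pair
performed by a single thread, with at most one unmatched acquire at the end. -/
inductive LockAlt (l : ℕ) : List Event → Prop
  | nil : LockAlt l []
  | pending (t : ℕ) : LockAlt l [⟨t, Op.acq l⟩]
  | pair (t : ℕ) {rest : List Event} : LockAlt l rest →
      LockAlt l (⟨t, Op.acq l⟩ :: ⟨t, Op.rel l⟩ :: rest)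

/-- Well-formedness of an event sequence: for each lock, the projection alternates
matched acquire/release pairs, with at most one pending acquire. -/
def WellFormedEvents (es : List Event) : Prop := ∀ l, LockAlt l (es.filter (onLock l))

/-- Words of the language `(Σ_t ⟨t, acq(l)⟩ · ⟨t, rel(l)⟩)*`. -/
inductive PairsLang (l : ℕ) : List Event → Prop
  | nil : PairsLang l []
  | pair (t : ℕ) {rest : List Event} : PairsLang l rest →
      PairsLang l (⟨t, Op.acq l⟩ :: ⟨t, Op.rel l⟩ :: rest)

/-- Lock semantics: for every lock `l`, the projection of the trace onto events on `l`
is a prefix of a word in the language `(Σ_t ⟨t, acq(l)⟩ · ⟨t, rel(l)⟩)*`. -/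
def LockSem (σ : List Event) : Prop :=
  ∀ l, ∃ w, PairsLang l w ∧ (σ.filter (onLock l)) <+: w

/-- Thread `t` holds lock `l` after the prefix of length `n`: the last event of the
prefix on lock `l` is an acquire of `l` by `t`. -/
def Holds (σ : List Event) (n t l : ℕ) : Prop :=
  ∃ i, i < n ∧ isAcq σ l i ∧ threadOf σ i = t ∧
    ∀ j, i < j → j < n → j < σ.length → onLock l (evAt σ j) = false

/-- `r` is the matching release of the acquire `a`: same thread, same lock, with no
intervening event on that lock in between. -/
def MatchRel (σ : List Event) (a r : ℕ) : Prop :=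
  ∃ l, isAcq σ l a ∧ isRel σ l r ∧ a < r ∧ threadOf σ a = threadOf σ r ∧
    ∀ k, a < k → k < r → ¬ (isAcq σ l k ∨ isRel σ l k)

/-- `i` is the last write (on the common variable) before the read `j` in `σ`. -/
def LastWrite (σ : List Event) (i j : ℕ) : Prop :=
  ∃ x, isWrite σ x i ∧ isRead σ x j ∧ i < j ∧ ∀ k, i < k → k < j → ¬ isWrite σ x k

/-- `i` is the immediate thread-order predecessor of `j` in `σ`. -/
def Prev (σ : List Event) (j i : ℕ) : Prop :=
  i < j ∧ j < σ.length ∧ threadOf σ i = threadOf σ j ∧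
    ∀ k, i < k → k < j → threadOf σ k ≠ threadOf σ j

/-- `S` is downward-closed with respect to thread order. -/
def TODownClosed (σ : List Event) (S : Set ℕ) : Prop :=
  ∀ i j, TO σ i j → j ∈ S → i ∈ S

/-- `S` is `(TO, lw)`-closed. -/
def TOLWClosed (σ : List Event) (S : Set ℕ) : Prop :=
  TODownClosed σ S ∧ ∀ i j, LastWrite σ i j → j ∈ S → i ∈ S

/-- `S` is sync-preserving closed. -/
def SPClosed (σ : List Event) (S : Set ℕ) : Prop :=
  TOLWClosed σ S ∧
    ∀ l a1 a2 r1, isAcq σ l a1 → isAcq σ l a2 → a1 < a2 →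
      a1 ∈ S → a2 ∈ S → MatchRel σ a1 r1 → r1 ∈ S

/-- The sync-preserving closure of `S`. -/
def SPClosure (σ : List Event) (S : Set ℕ) : Set ℕ :=
  ⋂₀ {S' : Set ℕ | S ⊆ S' ∧ SPClosed σ S'}

def PrevSet (σ : List Event) (j : ℕ) : Set ℕ := {i | Prev σ j i}

def SPIdeal (σ : List Event) (e1 e2 : ℕ) : Set ℕ :=
  SPClosure σ (PrevSet σ e1 ∪ PrevSet σ e2)

/-- `i` occurs before `j` in the reordering `ρ` (a list of σ-indices). -/
def RBefore (ρ : List ℕ) (i j : ℕ) : Prop :=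
  i ∈ ρ ∧ j ∈ ρ ∧ ρ.idxOf i < ρ.idxOf j

/-- `i` is the last write before the read `j` in the reordering `ρ`. -/
def LastWriteIn (σ : List Event) (ρ : List ℕ) (i j : ℕ) : Prop :=
  ∃ x, isWrite σ x i ∧ isRead σ x j ∧ RBefore ρ i j ∧
    ∀ k, isWrite σ x k → ¬ (RBefore ρ i k ∧ RBefore ρ k j)

/-- `ρ` (a duplicate-free list of σ-indices, read as a trace) is a correct reordering
of `σ`: a well-formed trace over a subset of events of `σ` that is downward-closed
under thread order, respects thread order, and in which every read observes the
same last write as in `σ`. -/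
def CorrectReordering (σ : List Event) (ρ : List ℕ) : Prop :=
  ρ.Nodup ∧ (∀ i ∈ ρ, i < σ.length) ∧
  WellFormedEvents (ρ.map (evAt σ)) ∧
  (∀ i j, TO σ i j → j ∈ ρ → i ∈ ρ) ∧
  (∀ i j, i ∈ ρ → j ∈ ρ → i ≠ j → TO σ i j → RBefore ρ i j) ∧
  (∀ j x, isRead σ x j → j ∈ ρ → ∀ i, LastWriteIn σ ρ i j ↔ LastWrite σ i j)

/-- Event `e` of `σ` is σ-enabled in the reordering `ρ`. -/
def EnabledIn (σ : List Event) (ρ : List ℕ) (e : ℕ) : Prop :=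
  e < σ.length ∧ e ∉ ρ ∧ ∀ i, i ≠ e → TO σ i e → i ∈ ρ

/-- `ρ` is sync-preserving w.r.t. `σ`: any two same-lock acquires occurring in `ρ`
appear in the same relative order as in `σ`. -/
def SyncPreserving (σ : List Event) (ρ : List ℕ) : Prop :=
  ∀ l a1 a2, isAcq σ l a1 → isAcq σ l a2 → a1 ∈ ρ → a2 ∈ ρ →
    (RBefore ρ a1 a2 ↔ a1 < a2)

/-- Conflicting events: different threads, common variable, at least one write. -/
def Conflict (σ : List Event) (i j : ℕ) : Prop :=
  i < σ.length ∧ j < σ.length ∧ threadOf σ i ≠ threadOf σ j ∧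
    ∃ x, (isWrite σ x i ∧ (isWrite σ x j ∨ isRead σ x j)) ∨
         (isRead σ x i ∧ isWrite σ x j)

/-- `(e1, e2)` is a sync-preserving race of `σ`. -/
def SPRace (σ : List Event) (e1 e2 : ℕ) : Prop :=
  Conflict σ e1 e2 ∧ ∃ ρ : List ℕ, CorrectReordering σ ρ ∧ SyncPreserving σ ρ ∧
    EnabledIn σ ρ e1 ∧ EnabledIn σ ρ e2

/-- Happens-before: smallest transitive relation containing thread order and
ordering each release of a lock before every later acquire of that lock. -/
inductive HB (σ : List Event) : ℕ → ℕ → Prop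
  | to {i j : ℕ} : TO σ i j → HB σ i j
  | relacq {l i j : ℕ} : isRel σ l i → isAcq σ l j → i < j → HB σ i j
  | trans {i j k : ℕ} : HB σ i j → HB σ j k → HB σ i k

/-- Schedulable-happens-before: smallest transitive relation containing HB and
ordering each write of a variable before every later read of that variable. -/
inductive SHB (σ : List Event) : ℕ → ℕ → Prop
  | hb {i j : ℕ} : HB σ i j → SHB σ i j
  | wr {x i j : ℕ} : isWrite σ x i → isRead σ x j → i < j → SHB σ i j
  | trans {i j k : ℕ} : SHB σ i j → SHB σ j k → SHB σ i k


/-! ### Auxiliary development -/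

section Aux
open List

variable (σ : List Event)

def LockEv (l i : ℕ) : Prop := isAcq σ l i ∨ isRel σ l i

lemma onLock_iff (l : ℕ) (e : Event) :
    onLock l e = true ↔ (e.op = Op.acq l ∨ e.op = Op.rel l) := by
  simp [onLock]

lemma lockEv_iff {l i : ℕ} (hi : i < σ.length) :
    LockEv σ l i ↔ onLock l (evAt σ i) = true := by
  simp [LockEv, isAcq, isRel, onLock_iff, hi]

lemma evAt_acq {l i : ℕ} (h : isAcq σ l i) : evAt σ i = ⟨threadOf σ i, Op.acq l⟩ := by
  have h2 := h.2
  cases hv : evAt σ i with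
  | mk t o => rw [hv] at h2; simp [threadOf, hv, show o = Op.acq l from h2]

lemma evAt_rel {l i : ℕ} (h : isRel σ l i) : evAt σ i = ⟨threadOf σ i, Op.rel l⟩ := by
  have h2 := h.2
  cases hv : evAt σ i with
  | mk t o => rw [hv] at h2; simp [threadOf, hv, show o = Op.rel l from h2]

lemma acq_ne_rel {l l' i j : ℕ} (ha : isAcq σ l i) (hr : isRel σ l' j) : i ≠ j := by
  intro h; subst h
  exact Op.noConfusion (ha.2.symm.trans hr.2)

lemma acq_lock_eq {l l' i : ℕ} (ha : isAcq σ l i) (ha' : isAcq σ l' i) : l = l' := by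
  have := ha.2.symm.trans ha'.2
  injection this

lemma rel_lock_eq {l l' i : ℕ} (ha : isRel σ l i) (ha' : isRel σ l' i) : l = l' := by
  have := ha.2.symm.trans ha'.2
  injection this

lemma matchRel_lockEv {a r : ℕ} (h : MatchRel σ a r) {l : ℕ} (ha : isAcq σ l a) :
    isRel σ l r ∧ a < r ∧ threadOf σ a = threadOf σ r ∧
      ∀ k, a < k → k < r → ¬ LockEv σ l k := by
  obtain ⟨l', ha', hr', hlt, ht, hb⟩ := h
  have : l' = l := acq_lock_eq σ ha' ha
  subst this
  exact ⟨hr', hlt, ht, hb⟩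

lemma matchRel_unique_rel {a r r' : ℕ} (h1 : MatchRel σ a r) (h2 : MatchRel σ a r') :
    r = r' := by
  obtain ⟨l, ha, hr, hlt, ht, hb⟩ := h1
  obtain ⟨hr', hlt', ht', hb'⟩ := matchRel_lockEv σ h2 ha
  by_contra hne
  rcases Nat.lt_or_ge r r' with h | h
  · exact hb' r hlt h (Or.inr hr)
  · exact hb r' hlt' (lt_of_le_of_ne h (Ne.symm hne)) (Or.inr hr')

lemma matchRel_unique_acq {a a' r : ℕ} (h1 : MatchRel σ a r) (h2 : MatchRel σ a' r) :
    a = a' := by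
  obtain ⟨l, ha, hr, hlt, ht, hb⟩ := h1
  obtain ⟨l2, ha2, hr2, hlt2, ht2, hb2⟩ := h2
  have : l2 = l := rel_lock_eq σ hr2 hr
  subst this
  by_contra hne
  rcases Nat.lt_or_ge a a' with h | h
  · exact hb a' h hlt2 (Or.inl ha2)
  · exact hb2 a (lt_of_le_of_ne h (Ne.symm hne)) hlt (Or.inl ha)

/-- Index-level lock alternation. -/
inductive IdxAlt (σ : List Event) (l : ℕ) : List ℕ → Prop
  | nil : IdxAlt σ l []
  | pending (a : ℕ) : isAcq σ l a → IdxAlt σ l [a]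
  | pair (a r : ℕ) (rest : List ℕ) : isAcq σ l a → isRel σ l r →
      threadOf σ a = threadOf σ r → IdxAlt σ l rest → IdxAlt σ l (a :: r :: rest)

lemma IdxAlt.toLockAlt {l : ℕ} {L : List ℕ} (h : IdxAlt σ l L) :
    LockAlt l (L.map (evAt σ)) := by
  induction h with
  | nil => exact LockAlt.nil
  | pending a ha =>
      rw [List.map_singleton, evAt_acq σ ha]
      exact LockAlt.pending _
  | pair a r rest ha hr ht _ ih =>
      rw [List.map_cons, List.map_cons, evAt_acq σ ha, evAt_rel σ hr, ← ht]
      exact LockAlt.pair _ ih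

lemma map_range_evAt : (List.range σ.length).map (evAt σ) = σ := by
  apply List.ext_getElem
  · simp
  · intro i h1 h2
    simp only [List.getElem_map, List.getElem_range]
    simp [evAt, List.getD_eq_getElem?_getD, List.getElem?_eq_getElem h2]

lemma idxAlt_of_prefix {l : ℕ} {w : List Event} (hw : PairsLang l w) :
    ∀ L : List ℕ, (∀ i ∈ L, i < σ.length) → L.map (evAt σ) <+: w → IdxAlt σ l L := by
  induction hw with
  | nil =>
      intro L _ hp
      have h0 := List.prefix_nil.mp hp
      have : L = [] := by cases L <;> simp_all
      subst this; exact IdxAlt.nil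
  | pair t hrest ih =>
      intro L hb hp
      match L with
      | [] => exact IdxAlt.nil
      | [a] =>
          rw [List.map_singleton] at hp
          have h1 := (List.cons_prefix_cons.mp hp).1
          exact IdxAlt.pending a ⟨hb a (by simp), by rw [h1]⟩
      | a :: r :: L' =>
          rw [List.map_cons, List.map_cons] at hp
          obtain ⟨h1, hp2⟩ := List.cons_prefix_cons.mp hp
          obtain ⟨h2, hp3⟩ := List.cons_prefix_cons.mp hp2
          have ha : isAcq σ l a := ⟨hb a (by simp), by rw [h1]⟩
          have hr : isRel σ l r := ⟨hb r (by simp), by rw [h2]⟩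
          have ht : threadOf σ a = threadOf σ r := by
            simp [threadOf, h1, h2]
          exact IdxAlt.pair a r L' ha hr ht
            (ih L' (fun i hi => hb i (by simp [hi])) hp3)

def lockIdxs (l : ℕ) : List ℕ :=
  (List.range σ.length).filter (fun i => onLock l (evAt σ i))

lemma mem_lockIdxs {l i : ℕ} : i ∈ lockIdxs σ l ↔ i < σ.length ∧ LockEv σ l i := by
  simp only [lockIdxs, List.mem_filter, List.mem_range]
  constructor
  · rintro ⟨h1, h2⟩; exact ⟨h1, (lockEv_iff σ h1).mpr h2⟩
  · rintro ⟨h1, h2⟩; exact ⟨h1, (lockEv_iff σ h1).mp h2⟩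

lemma sorted_lockIdxs (l : ℕ) : (lockIdxs σ l).Pairwise (· < ·) :=
  List.pairwise_lt_range.filter _

lemma map_lockIdxs (l : ℕ) : (lockIdxs σ l).map (evAt σ) = σ.filter (onLock l) := by
  conv_rhs => rw [← map_range_evAt σ]
  rw [List.filter_map]
  rfl

lemma idxAlt_matches {l : ℕ} {L : List ℕ} (h : IdxAlt σ l L) :
    L.Pairwise (· < ·) →
    (∀ k, LockEv σ l k → k ∉ L → ∀ j ∈ L, k < j) →
    (∀ r ∈ L, isRel σ l r → ∃ a ∈ L, MatchRel σ a r) ∧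
    (∀ a ∈ L, isAcq σ l a → ∀ k ∈ L, a < k → ∃ r ∈ L, MatchRel σ a r ∧ r ≤ k) := by
  induction h with
  | nil => intro _ _; simp
  | pending a ha =>
      intro _ _
      constructor
      · intro r hr hrel
        rw [List.mem_singleton] at hr; subst hr
        exact absurd rfl (acq_ne_rel σ ha hrel)
      · intro a' ha' _ k hk hlt
        rw [List.mem_singleton] at ha' hk; omega
  | pair a r rest ha hr ht hrest ih =>
      intro hsort hcompl
      have hpc := List.pairwise_cons.mp hsort
      have hpc2 := List.pairwise_cons.mp hpc.2
      have har : a < r := hpc.1 r (by simp)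
      have hcomplrest : ∀ k, LockEv σ l k → k ∉ rest → ∀ j ∈ rest, k < j := by
        intro k hk hkn j hj
        by_cases hkL : k ∈ a :: r :: rest
        · rcases List.mem_cons.mp hkL with h1 | h1
          · subst h1; exact hpc.1 j (by simp [hj])
          · rcases List.mem_cons.mp h1 with h2 | h2
            · subst h2; exact hpc2.1 j hj
            · exact absurd h2 hkn
        · exact hcompl k hk hkL j (by simp [hj])
      have ihres := ih hpc2.2 hcomplrest
      have hmatch : MatchRel σ a r := by
        refine ⟨l, ha, hr, har, ht, ?_⟩
        intro k hk1 hk2 hlk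
        have hkL : k ∈ a :: r :: rest := by
          by_contra hkn
          have := hcompl k hlk hkn a (by simp)
          omega
        rcases List.mem_cons.mp hkL with h1 | h1
        · omega
        rcases List.mem_cons.mp h1 with h2 | h2
        · omega
        · have := hpc2.1 k h2; omega
      constructor
      · intro r' hr' hrel'
        rcases List.mem_cons.mp hr' with h1 | h1
        · subst h1; exact absurd rfl (acq_ne_rel σ ha hrel')
        rcases List.mem_cons.mp h1 with h2 | h2
        · subst h2; exact ⟨a, by simp, hmatch⟩
        · obtain ⟨a', ha'm, hm⟩ := ihres.1 r' h2 hrel'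
          exact ⟨a', by simp [ha'm], hm⟩
      · intro a' ha'mem hacq' k hk hlt
        rcases List.mem_cons.mp ha'mem with h1 | h1
        · subst h1
          refine ⟨r, by simp, hmatch, ?_⟩
          rcases List.mem_cons.mp hk with h2 | h2
          · omega
          rcases List.mem_cons.mp h2 with h3 | h3
          · omega
          · have := hpc2.1 k h3; omega
        rcases List.mem_cons.mp h1 with h2 | h2
        · subst h2; exact absurd rfl (acq_ne_rel σ hacq' hr)
        · have ha'r : r < a' := hpc2.1 a' h2
          have hkrest : k ∈ rest := by
            rcases List.mem_cons.mp hk with h3 | h3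
            · exfalso; have := hpc.1 a' (by simp [h2]); omega
            rcases List.mem_cons.mp h3 with h4 | h4
            · omega
            · exact h4
          obtain ⟨r', hr'm, hm, hle⟩ := ihres.2 a' h2 hacq' k hkrest hlt
          exact ⟨r', by simp [hr'm], hm, hle⟩

lemma idxAlt_lockIdxs (hWF : LockSem σ) (l : ℕ) : IdxAlt σ l (lockIdxs σ l) := by
  obtain ⟨w, hw, hpre⟩ := hWF l
  exact idxAlt_of_prefix σ hw (lockIdxs σ l)
    (fun i hi => ((mem_lockIdxs σ).mp hi).1)
    (by rw [map_lockIdxs]; exact hpre)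

lemma rel_has_match (hWF : LockSem σ) {l r : ℕ} (hr : isRel σ l r) :
    ∃ a, MatchRel σ a r := by
  have h := idxAlt_matches σ (idxAlt_lockIdxs σ hWF l) (sorted_lockIdxs σ l)
    (fun k hk hkn _ _ => absurd ((mem_lockIdxs σ).mpr
      ⟨hk.elim (·.1) (·.1), hk⟩) hkn)
  obtain ⟨a, _, hm⟩ := h.1 r ((mem_lockIdxs σ).mpr ⟨hr.1, Or.inr hr⟩) hr
  exact ⟨a, hm⟩

lemma acq_has_match (hWF : LockSem σ) {l a k : ℕ} (ha : isAcq σ l a)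
    (hk : LockEv σ l k) (hlt : a < k) : ∃ r, MatchRel σ a r ∧ r ≤ k := by
  have h := idxAlt_matches σ (idxAlt_lockIdxs σ hWF l) (sorted_lockIdxs σ l)
    (fun k hk hkn _ _ => absurd ((mem_lockIdxs σ).mpr
      ⟨hk.elim (·.1) (·.1), hk⟩) hkn)
  obtain ⟨r, _, hm, hle⟩ := h.2 a ((mem_lockIdxs σ).mpr ⟨ha.1, Or.inl ha⟩) ha
    k ((mem_lockIdxs σ).mpr ⟨hk.elim (·.1) (·.1), hk⟩) hlt
  exact ⟨r, hm, hle⟩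

/-! ### Generic `indexOf` lemmas -/

lemma indexOf_lt_of_lt_sorted {L : List ℕ} (hs : L.Pairwise (· < ·)) {i j : ℕ}
    (hi : i ∈ L) (hj : j ∈ L) (hij : i < j) : L.idxOf i < L.idxOf j := by
  by_contra hc
  push_neg at hc
  have hii := List.idxOf_lt_length_iff.mpr hi
  have hjj := List.idxOf_lt_length_iff.mpr hj
  rcases eq_or_lt_of_le hc with heq | hlt
  · have e1 : L[L.idxOf j]? = some j := by
      rw [List.getElem?_eq_getElem hjj, List.getElem_idxOf hjj]
    have e2 : L[L.idxOf i]? = some i := by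
      rw [List.getElem?_eq_getElem hii, List.getElem_idxOf hii]
    rw [heq, e2] at e1
    have : i = j := by injection e1
    omega
  · have := (List.pairwise_iff_getElem.mp hs) _ _ hjj hii hlt
    rw [List.getElem_idxOf, List.getElem_idxOf] at this
    omega

lemma indexOf_filter_lt {α : Type} [DecidableEq α] (p : α → Bool) :
    ∀ {L : List α}, L.Nodup → ∀ {a b}, a ∈ L.filter p → b ∈ L.filter p →
      L.idxOf a < L.idxOf b →
      (L.filter p).idxOf a < (L.filter p).idxOf b := by
  intro L
  induction L with
  | nil => simp
  | cons x t ih =>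
      intro hnd a b haf hbf hab
      have hndt := (List.nodup_cons.mp hnd).2
      by_cases hpx : p x
      · rw [List.filter_cons_of_pos hpx] at haf hbf ⊢
        by_cases hax : a = x
        · subst hax
          have hbx : b ≠ a := by
            intro hba; subst hba; omega
          rw [List.idxOf_cons_self]
          rw [List.idxOf_cons_ne _ (Ne.symm hbx)]
          omega
        · have hbx : b ≠ x := by
            intro hbe; subst hbe
            rw [List.idxOf_cons_self] at hab; omega
          rw [List.idxOf_cons_ne _ (Ne.symm hax), List.idxOf_cons_ne _ (Ne.symm hbx)]
          rw [List.idxOf_cons_ne _ (Ne.symm hax), List.idxOf_cons_ne _ (Ne.symm hbx)] at hab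
          have h1 : a ∈ t.filter p := by
            rcases List.mem_cons.mp haf with h | h
            · exact absurd h hax
            · exact h
          have h2 : b ∈ t.filter p := by
            rcases List.mem_cons.mp hbf with h | h
            · exact absurd h hbx
            · exact h
          have := ih hndt h1 h2 (by omega)
          omega
      · rw [List.filter_cons_of_neg hpx] at haf hbf ⊢
        have hax : a ≠ x := by
          intro he; subst he
          have := List.of_mem_filter haf; simp [hpx] at this
        have hbx : b ≠ x := by
          intro he; subst he
          have := List.of_mem_filter hbf; simp [hpx] at this
        rw [List.idxOf_cons_ne _ (Ne.symm hax), List.idxOf_cons_ne _ (Ne.symm hbx)] at hab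
        exact ih hndt haf hbf (by omega)

lemma rbefore_filter {L : List ℕ} (hnd : L.Nodup) (p : ℕ → Bool) {a b : ℕ}
    (h : RBefore (L.filter p) a b) : RBefore L a b := by
  obtain ⟨ha, hb, hlt⟩ := h
  refine ⟨List.mem_of_mem_filter ha, List.mem_of_mem_filter hb, ?_⟩
  have hne : a ≠ b := by
    intro h'; subst h'; omega
  have haL := List.mem_of_mem_filter ha
  have hbL := List.mem_of_mem_filter hb
  rcases lt_trichotomy (L.idxOf a) (L.idxOf b) with h1 | h1 | h1
  · exact h1
  · exfalso; apply hne
    have hii := List.idxOf_lt_length_iff.mpr haL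
    have hjj := List.idxOf_lt_length_iff.mpr hbL
    have e1 : L[L.idxOf a]? = some a := by
      rw [List.getElem?_eq_getElem hii, List.getElem_idxOf hii]
    have e2 : L[L.idxOf b]? = some b := by
      rw [List.getElem?_eq_getElem hjj, List.getElem_idxOf hjj]
    rw [h1, e2] at e1
    injection e1 with hh
    exact hh.symm
  · have := indexOf_filter_lt p hnd hb ha h1
    omega

lemma lockAlt_next {l : ℕ} {es : List Event} (h : LockAlt l es) :
    ∀ k, (hk1 : k + 1 < es.length) → (hk : k < es.length) →
      es[k].op = Op.acq l → es[k+1] = ⟨es[k].thread, Op.rel l⟩ := by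
  induction h with
  | nil => intro k hk1; simp at hk1
  | pending t => intro k hk1; simp at hk1
  | pair t hrest ih =>
      intro k hk1 hk hacq
      match k with
      | 0 => simp
      | 1 =>
          exfalso
          simp only [List.getElem_cons_succ, List.getElem_cons_zero] at hacq
          exact Op.noConfusion hacq
      | k+2 =>
          simp only [List.getElem_cons_succ]
          simp only [List.length_cons] at hk1 hk
          exact ih k (by omega) (by omega)
            (by simpa using hacq)

/-- Key lemma: if two acquires of the same lock are both in a sync-preserving
correct reordering `ρ`, the matching release of the earlier one is in `ρ`. -/
lemma key_rel_mem (hWF : LockSem σ) {ρ : List ℕ} (hρ : CorrectReordering σ ρ)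
    (hsync : SyncPreserving σ ρ) {l a a' : ℕ} (ha : isAcq σ l a) (ha' : isAcq σ l a')
    (ham : a ∈ ρ) (ha'm : a' ∈ ρ) (hlt : a < a') :
    ∃ r, MatchRel σ a r ∧ r ∈ ρ := by
  obtain ⟨hnd, hbd, hwf, hdc, hto, hlw⟩ := hρ
  set M := ρ.filter (onLock l ∘ evAt σ) with hM
  have hLA : LockAlt l (M.map (evAt σ)) := by
    have := hwf l
    rwa [List.filter_map] at this
  have haM : a ∈ M := List.mem_filter.mpr ⟨ham, by
    simp only [Function.comp_apply]; exact (lockEv_iff σ ha.1).mp (Or.inl ha)⟩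
  have ha'M : a' ∈ M := List.mem_filter.mpr ⟨ha'm, by
    simp only [Function.comp_apply]; exact (lockEv_iff σ ha'.1).mp (Or.inl ha')⟩
  have hndM : M.Nodup := hnd.filter _
  have hra : RBefore ρ a a' := (hsync l a a' ha ha' ham ha'm).mpr hlt
  have h1 : M.idxOf a < M.idxOf a' := indexOf_filter_lt _ hnd haM ha'M hra.2.2
  have hlenA : M.idxOf a < M.length := List.idxOf_lt_length_iff.mpr haM
  have hlen : M.idxOf a + 1 < M.length := by
    have := List.idxOf_lt_length_iff.mpr ha'M; omega
  set r := M[M.idxOf a + 1]'hlen with hrdef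
  have hrM : r ∈ M := List.getElem_mem _
  have hev : evAt σ r = ⟨(evAt σ a).thread, Op.rel l⟩ := by
    have hnext := lockAlt_next hLA (M.idxOf a)
      (by simpa using hlen) (by simpa using hlenA) (by
        rw [List.getElem_map, List.getElem_idxOf hlenA]
        exact ha.2)
    rw [List.getElem_map, List.getElem_map, List.getElem_idxOf hlenA] at hnext
    exact hnext
  have hrρ : r ∈ ρ := List.mem_of_mem_filter hrM
  have hrlen : r < σ.length := hbd r hrρ
  have hrrel : isRel σ l r := ⟨hrlen, by rw [hev]⟩
  have hthr : threadOf σ r = threadOf σ a := by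
    simp only [threadOf]; rw [hev]
  have hner : a ≠ r := acq_ne_rel σ ha hrrel
  have hidxr : M.idxOf r = M.idxOf a + 1 := List.Nodup.idxOf_getElem hndM _ hlen
  have hMord : RBefore M a r := ⟨haM, hrM, by rw [hidxr]; omega⟩
  have hρord : RBefore ρ a r := rbefore_filter hnd _ hMord
  obtain ⟨a0, hm0⟩ := rel_has_match σ hWF hrrel
  by_cases heq : a0 = a
  · exact ⟨r, heq ▸ hm0, hrρ⟩
  obtain ⟨l0, ha0, hr0, hlt0, hth0, hbet0⟩ := hm0
  have hl0 : l0 = l := rel_lock_eq σ hr0 hrrel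
  subst hl0
  have htha0 : threadOf σ a0 = threadOf σ a := hth0.trans hthr
  rcases lt_trichotomy r a with hca | hca | hca
  · exfalso
    have hTOra : TO σ r a := ⟨hca.le, ha.1, hthr⟩
    have := hto r a hrρ ham (Ne.symm hner) hTOra
    obtain ⟨_, _, hx⟩ := this
    obtain ⟨_, _, hy⟩ := hρord
    omega
  · exact absurd hca.symm hner
  · have ha0a : a < a0 := by
      rcases lt_trichotomy a0 a with h' | h' | h'
      · exact absurd (Or.inl ha) (hbet0 a h' hca)
      · exact absurd h' heq
      · exact h'
    obtain ⟨ra, hmra, hrale⟩ := acq_has_match σ hWF ha (Or.inl ha0) ha0a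
    obtain ⟨hrarel, hralt', hthra, _⟩ := matchRel_lockEv σ hmra ha
    have hra_ne : ra ≠ a0 := fun he => acq_ne_rel σ ha0 hrarel he.symm
    have hralt : ra < a0 := lt_of_le_of_ne hrale hra_ne
    have ha0ρ : a0 ∈ ρ := hdc a0 r ⟨hlt0.le, hrlen, hth0⟩ hrρ
    have hthra0 : threadOf σ ra = threadOf σ a0 := by rw [← hthra, htha0]
    have hraρ : ra ∈ ρ := hdc ra a0 ⟨hralt.le, ha0.1, hthra0⟩ ha0ρ
    exact ⟨ra, hmra, hraρ⟩

/-- Build `IdxAlt` from closure conditions (strong induction on length). -/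
lemma idxAlt_of_conds {l : ℕ} :
    ∀ n (L : List ℕ), L.length ≤ n → L.Pairwise (· < ·) →
    (∀ i ∈ L, LockEv σ l i) →
    (∀ r ∈ L, isRel σ l r → ∃ a ∈ L, MatchRel σ a r) →
    (∀ a ∈ L, isAcq σ l a → ∀ a' ∈ L, isAcq σ l a' → a < a' → ∃ r ∈ L, MatchRel σ a r) →
    IdxAlt σ l L := by
  intro n
  induction n with
  | zero =>
      intro L hlen _ _ _ _
      have : L = [] := List.length_eq_zero_iff.mp (Nat.le_zero.mp hlen)
      subst this; exact IdxAlt.nil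
  | succ n ih =>
      intro L hlen hsort hlock h1 h2
      match L with
      | [] => exact IdxAlt.nil
      | x :: tl =>
          have hpc := List.pairwise_cons.mp hsort
          have hacq : isAcq σ l x := by
            rcases hlock x (by simp) with hA | hR
            · exact hA
            · exfalso
              obtain ⟨a, haL, hm⟩ := h1 x (by simp) hR
              obtain ⟨l1, ha1, hr1, hlt1, _, _⟩ := hm
              rcases List.mem_cons.mp haL with he | he
              · omega
              · have := hpc.1 a he; omega
          match tl with
          | [] => exact IdxAlt.pending x hacq
          | y :: tl2 =>
              have hpc2 := List.pairwise_cons.mp hpc.2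
              have hxy : x < y := hpc.1 y (by simp)
              have hrel2 : isRel σ l y := by
                rcases hlock y (by simp) with hA | hR
                · exfalso
                  obtain ⟨r, hrL, hm⟩ := h2 x (by simp) hacq y (by simp) hA hxy
                  obtain ⟨hrrel, hltr, _, hbet⟩ := matchRel_lockEv σ hm hacq
                  rcases List.mem_cons.mp hrL with he | he
                  · exact acq_ne_rel σ hacq hrrel he.symm
                  rcases List.mem_cons.mp he with he2 | he2
                  · exact acq_ne_rel σ hA hrrel he2.symm
                  · have hyr : y < r := hpc2.1 r he2
                    exact hbet y hxy hyr (Or.inl hA)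
                · exact hR
              obtain ⟨a, haL, hma⟩ := h1 y (by simp) hrel2
              obtain ⟨l1, ha1, hr1, hlta, htha, _⟩ := id hma
              have ha_eq : a = x := by
                rcases List.mem_cons.mp haL with he | he
                · exact he
                rcases List.mem_cons.mp he with he2 | he2
                · exfalso; omega
                · exfalso; have := hpc2.1 a he2; omega
              subst a
              have hl1 : l1 = l := acq_lock_eq σ ha1 hacq
              subst hl1
              simp only [List.length_cons] at hlen
              refine IdxAlt.pair x y tl2 hacq hrel2 htha
                (ih tl2 (by omega) hpc2.2
                  (fun i hi => hlock i (by simp [hi])) ?_ ?_)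
              · intro r hrmem hrrel
                obtain ⟨a', ha'L, hm'⟩ := h1 r (by simp [hrmem]) hrrel
                have hyr : y < r := hpc2.1 r hrmem
                have ha'x : a' ≠ x := by
                  intro he; subst he
                  have := matchRel_unique_rel σ hm' hma
                  omega
                have ha'y : a' ≠ y := by
                  obtain ⟨l2, ha2, _, _, _, _⟩ := hm'
                  exact acq_ne_rel σ ha2 hrel2
                refine ⟨a', ?_, hm'⟩
                rcases List.mem_cons.mp ha'L with he | he
                · exact absurd he ha'x
                rcases List.mem_cons.mp he with he2 | he2
                · exact absurd he2 ha'y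
                · exact he2
              · intro a1 h1m hacq1 a2 h2m hacq2 hlt12
                obtain ⟨r, hrL, hm⟩ := h2 a1 (by simp [h1m]) hacq1 a2 (by simp [h2m]) hacq2 hlt12
                obtain ⟨hrrel, _, _, _⟩ := matchRel_lockEv σ hm hacq1
                have hrx : r ≠ x := fun he => acq_ne_rel σ hacq hrrel he.symm
                have hry : r ≠ y := by
                  intro he; subst he
                  have := matchRel_unique_acq σ hm hma
                  subst this
                  have := hpc2.1 a1 h1m
                  omega
                refine ⟨r, ?_, hm⟩
                rcases List.mem_cons.mp hrL with he | he
                · exact absurd he hrx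
                rcases List.mem_cons.mp he with he2 | he2
                · exact absurd he2 hry
                · exact he2

end Aux

/-- if `(e1, e2)` is a sync-preserving race of `σ`, then there is a
correct reordering of `σ` in which both `e1` and `e2` are σ-enabled and whose total
order is a restriction of the trace order of `σ` (i.e., a subsequence of `σ`). -/
theorem stmt3 (σ : List Event) (hWF : LockSem σ) (e1 e2 : ℕ)
    (h : SPRace σ e1 e2) :
    ∃ ρ : List ℕ, CorrectReordering σ ρ ∧ EnabledIn σ ρ e1 ∧ EnabledIn σ ρ e2 ∧
      ρ.Pairwise (· < ·) := by
  classical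
  obtain ⟨hconf, ρ, hρ, hsync, hen1, hen2⟩ := h
  obtain ⟨hnd, hbd, hwf, hdc, hto, hlw⟩ := hρ
  set ρ' := (List.range σ.length).filter (fun i => decide (i ∈ ρ)) with hρ'def
  have hmem : ∀ i, i ∈ ρ' ↔ i ∈ ρ := by
    intro i
    simp only [hρ'def, List.mem_filter, List.mem_range, decide_eq_true_eq]
    exact ⟨fun h => h.2, fun h => ⟨hbd i h, h⟩⟩
  have hsorted : ρ'.Pairwise (· < ·) := List.pairwise_lt_range.filter _
  have hnd' : ρ'.Nodup := hsorted.imp Nat.ne_of_lt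
  have hbd' : ∀ i ∈ ρ', i < σ.length := by
    intro i hi; rw [hmem] at hi; exact hbd i hi
  have hord : ∀ i j, RBefore ρ' i j ↔ (i ∈ ρ' ∧ j ∈ ρ' ∧ i < j) := by
    intro i j
    constructor
    · rintro ⟨hi, hj, hlt⟩
      refine ⟨hi, hj, ?_⟩
      rcases lt_trichotomy i j with h | h | h
      · exact h
      · subst h; omega
      · have := indexOf_lt_of_lt_sorted hsorted hj hi h; omega
    · rintro ⟨hi, hj, hlt⟩
      exact ⟨hi, hj, indexOf_lt_of_lt_sorted hsorted hi hj hlt⟩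
  have hCR : CorrectReordering σ ρ' := by
    refine ⟨hnd', hbd', ?_, ?_, ?_, ?_⟩
    · -- well-formedness
      intro l
      rw [List.filter_map]
      set L' := ρ'.filter (onLock l ∘ evAt σ) with hL'
      have hmemL' : ∀ i, i ∈ L' ↔ (i ∈ ρ ∧ i < σ.length ∧ LockEv σ l i) := by
        intro i
        rw [hL', List.mem_filter]
        constructor
        · rintro ⟨h1, h2⟩
          have hl := hbd' i h1
          exact ⟨(hmem i).mp h1, hl, (lockEv_iff σ hl).mpr h2⟩
        · rintro ⟨h1, h2, h3⟩
          exact ⟨(hmem i).mpr h1, (lockEv_iff σ h2).mp h3⟩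
      have key : IdxAlt σ l L' := by
        apply idxAlt_of_conds σ L'.length L' le_rfl (hsorted.filter _)
        · intro i hi; exact ((hmemL' i).mp hi).2.2
        · intro r hr hrel
          obtain ⟨a, hma⟩ := rel_has_match σ hWF hrel
          obtain ⟨l1, ha1, hr1, hlt1, hth1, _⟩ := id hma
          have hl1 : l1 = l := rel_lock_eq σ hr1 hrel
          subst hl1
          have haρ : a ∈ ρ := hdc a r ⟨hlt1.le, hrel.1, hth1⟩ ((hmemL' r).mp hr).1
          exact ⟨a, (hmemL' a).mpr ⟨haρ, ha1.1, Or.inl ha1⟩, hma⟩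
        · intro a ha hacq a' ha' hacq' hlt
          obtain ⟨r, hmr, hrρ⟩ := key_rel_mem σ hWF ⟨hnd, hbd, hwf, hdc, hto, hlw⟩
            hsync hacq hacq' ((hmemL' a).mp ha).1 ((hmemL' a').mp ha').1 hlt
          obtain ⟨hrrel, _, _, _⟩ := matchRel_lockEv σ hmr hacq
          exact ⟨r, (hmemL' r).mpr ⟨hrρ, hrrel.1, Or.inr hrrel⟩, hmr⟩
      exact IdxAlt.toLockAlt σ key
    · -- TO downward closed
      intro i j hTO hj
      rw [hmem] at hj ⊢
      exact hdc i j hTO hj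
    · -- TO respected
      intro i j hi hj hne hTO
      rw [hord]
      exact ⟨hi, hj, lt_of_le_of_ne hTO.1 hne⟩
    · -- last writes
      intro j x hread hj i
      constructor
      · rintro ⟨x0, hw0, hr0, hRB, hnb⟩
        have hij : i < j := ((hord i j).mp hRB).2.2
        have hiρ' : i ∈ ρ' := hRB.1
        haveI : DecidablePred (fun k => isWrite σ x0 k) := fun k => by
          unfold isWrite; infer_instance
        have hile : i ≤ j - 1 := by omega
        set w := Nat.findGreatest (fun k => isWrite σ x0 k) (j - 1) with hw
        have hPw : isWrite σ x0 w := Nat.findGreatest_spec hile hw0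
        have hwle : w ≤ j - 1 := Nat.findGreatest_le _
        have hiw : i ≤ w := Nat.le_findGreatest hile hw0
        have hLWw : LastWrite σ w j := by
          refine ⟨x0, hPw, hr0, by omega, ?_⟩
          intro k h1 h2 hk
          exact Nat.findGreatest_is_greatest h1 (by omega) hk
        by_cases hwi : w = i
        · exact hwi ▸ hLWw
        · exfalso
          have hIn : LastWriteIn σ ρ w j := (hlw j x hread ((hmem j).mp hj) w).mpr hLWw
          obtain ⟨x1, _, _, hRBw, _⟩ := hIn
          have hwρ' : w ∈ ρ' := (hmem w).mpr hRBw.1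
          have hiww : i < w := lt_of_le_of_ne hiw (Ne.symm hwi)
          exact hnb w hPw ⟨(hord i w).mpr ⟨hiρ', hwρ', hiww⟩,
            (hord w j).mpr ⟨hwρ', hj, by omega⟩⟩
      · intro hLW
        obtain ⟨x0, hwix, hrjx, hij, hnb⟩ := hLW
        have hIn : LastWriteIn σ ρ i j :=
          (hlw j x hread ((hmem j).mp hj) i).mpr ⟨x0, hwix, hrjx, hij, hnb⟩
        obtain ⟨x1, _, _, hRBi, _⟩ := hIn
        refine ⟨x0, hwix, hrjx, (hord i j).mpr ⟨(hmem i).mpr hRBi.1, hj, hij⟩, ?_⟩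
        rintro k hkw ⟨h1, h2⟩
        exact hnb k ((hord i k).mp h1).2.2 ((hord k j).mp h2).2.2 hkw
  have hen : ∀ e, EnabledIn σ ρ e → EnabledIn σ ρ' e := by
    rintro e ⟨h1, h2, h3⟩
    exact ⟨h1, fun hc => h2 ((hmem e).mp hc), fun i hi hTO => (hmem i).mpr (h3 i hi hTO)⟩
  exact ⟨ρ', hCR, hen e1 hen1, hen e2 hen2, hsorted⟩
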